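/- For every sentence φ of the guarded fragment with constants c₁,…,c_k, the sentence φ' = ∃c⃗ (P(c⃗) ∧ φ[R*(c⃗, x⃗)/R(x⃗)]), obtained by replacing each m-ary relation symbol R by a fresh (k+m)-ary symbol R*, adding a fresh k-ary predicate P, and quantifying the constants as variables, is a constant-free guarded fragment sentence that is satisfiable if and only if φ is satisfiable. -/

import Mathlib

/-! Elimination of constants from the guarded fragment: for every GF sentence
`φ` with constants `c₁,…,c_k`, the sentence
`φ' = ∃c⃗ (P(c⃗) ∧ φ[R*(c⃗,x⃗)/R(x⃗)])` is a constant-free GF sentence that is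
satisfiable iff `φ` is. -/

namespace Stmt9

/-- First-order formulas over relation symbols `R` (arities `ar`) and
constants `C`, with free variables among `Fin n`; `ex k φ` and `all k φ`
bind the last `k` variables of `φ`. -/
inductive Fml (R C : Type) (ar : R → ℕ) : ℕ → Type where
  | tru {n : ℕ} : Fml R C ar n
  | fls {n : ℕ} : Fml R C ar n
  | atom {n : ℕ} (r : R) (args : Fin (ar r) → (Fin n ⊕ C)) : Fml R C ar n
  | eq {n : ℕ} (t₁ t₂ : Fin n ⊕ C) : Fml R C ar n
  | not {n : ℕ} (φ : Fml R C ar n) : Fml R C ar n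
  | and {n : ℕ} (φ ψ : Fml R C ar n) : Fml R C ar n
  | or {n : ℕ} (φ ψ : Fml R C ar n) : Fml R C ar n
  | ex {n : ℕ} (k : ℕ) (φ : Fml R C ar (n + k)) : Fml R C ar n
  | all {n : ℕ} (k : ℕ) (φ : Fml R C ar (n + k)) : Fml R C ar n

variable {R C : Type} {ar : R → ℕ}

/-- Tarskian satisfaction. -/
def Fml.Realize {M : Type} (interp : ∀ r : R, (Fin (ar r) → M) → Prop)
    (cI : C → M) : {n : ℕ} → Fml R C ar n → (Fin n → M) → Prop
  | _, .tru, _ => True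
  | _, .fls, _ => False
  | _, .atom r args, a => interp r fun i => (args i).elim a cI
  | _, .eq t₁ t₂, a => t₁.elim a cI = t₂.elim a cI
  | _, .not φ, a => ¬ φ.Realize interp cI a
  | _, .and φ ψ, a => φ.Realize interp cI a ∧ ψ.Realize interp cI a
  | _, .or φ ψ, a => φ.Realize interp cI a ∨ ψ.Realize interp cI a
  | _, .ex k φ, a => ∃ w : Fin k → M, φ.Realize interp cI (Fin.append a w)
  | _, .all k φ, a => ∀ w : Fin k → M, φ.Realize interp cI (Fin.append a w)

/-- Free variables of a formula. -/
def Fml.freeVars : {n : ℕ} → Fml R C ar n → Set (Fin n)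
  | _, .tru => ∅
  | _, .fls => ∅
  | _, .atom _ args => {v | ∃ i, args i = Sum.inl v}
  | _, .eq t₁ t₂ => {v | t₁ = Sum.inl v ∨ t₂ = Sum.inl v}
  | _, .not φ => φ.freeVars
  | _, .and φ ψ => φ.freeVars ∪ ψ.freeVars
  | _, .or φ ψ => φ.freeVars ∪ ψ.freeVars
  | _, .ex k φ => {v | Fin.castAdd k v ∈ φ.freeVars}
  | _, .all k φ => {v | Fin.castAdd k v ∈ φ.freeVars}

/-- The guarded fragment: atomic formulas, Boolean combinations, and guarded
quantification `∃x⃗ (G ∧ ψ)` and `∀x⃗ (G → ψ)` where the atom `G` contains all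
free variables of `ψ`. -/
inductive IsGF : {n : ℕ} → Fml R C ar n → Prop where
  | tru {n : ℕ} : IsGF (Fml.tru (n := n))
  | fls {n : ℕ} : IsGF (Fml.fls (n := n))
  | atom {n : ℕ} (r : R) (args : Fin (ar r) → (Fin n ⊕ C)) : IsGF (Fml.atom r args)
  | eq {n : ℕ} (t₁ t₂ : Fin n ⊕ C) : IsGF (Fml.eq t₁ t₂)
  | not {n : ℕ} {φ : Fml R C ar n} : IsGF φ → IsGF φ.not
  | and {n : ℕ} {φ ψ : Fml R C ar n} : IsGF φ → IsGF ψ → IsGF (φ.and ψ)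
  | or {n : ℕ} {φ ψ : Fml R C ar n} : IsGF φ → IsGF ψ → IsGF (φ.or ψ)
  | ex {n k : ℕ} (r : R) (gargs : Fin (ar r) → (Fin (n + k) ⊕ C))
      {φ : Fml R C ar (n + k)} (hφ : IsGF φ)
      (hg : ∀ v ∈ φ.freeVars, ∃ i, gargs i = Sum.inl v) :
      IsGF (Fml.ex k ((Fml.atom r gargs).and φ))
  | all {n k : ℕ} (r : R) (gargs : Fin (ar r) → (Fin (n + k) ⊕ C))
      {φ : Fml R C ar (n + k)} (hφ : IsGF φ)
      (hg : ∀ v ∈ φ.freeVars, ∃ i, gargs i = Sum.inl v) :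
      IsGF (Fml.all k ((Fml.atom r gargs).not.or φ))

/-- The arities of the extended schema: the fresh guard predicate `P` (coded
by `none`) has arity `c`, and `R*` (coded by `some R`) has arity `c + ar R`. -/
def starAr (ar : R → ℕ) (c : ℕ) : Option R → ℕ
  | none => c
  | some r => c + ar r

/-- Replace every atom `R(t⃗)` by `R*(c⃗, t⃗)`, the constants still being
constants. -/
def star {c : ℕ} : {n : ℕ} → Fml R (Fin c) ar n → Fml (Option R) (Fin c) (starAr ar c) n
  | _, .tru => .tru
  | _, .fls => .fls
  | _, .atom r args =>
      .atom (some r) (Fin.addCases (fun j : Fin c => Sum.inr j) args)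
  | _, .eq t₁ t₂ => .eq t₁ t₂
  | _, .not φ => .not (star φ)
  | _, .and φ ψ => .and (star φ) (star ψ)
  | _, .or φ ψ => .or (star φ) (star ψ)
  | _, .ex k φ => .ex k (star φ)
  | _, .all k φ => .all k (star φ)

/-- Relabel the variables and constants of a formula along a map on
arguments; under a binder of `k` fresh variables the map is extended to keep
the bound variables. -/
def extendMap {C₁ C₂ : Type} {n m : ℕ} (f : (Fin n ⊕ C₁) → (Fin m ⊕ C₂)) (k : ℕ) :
    (Fin (n + k) ⊕ C₁) → (Fin (m + k) ⊕ C₂)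
  | .inl v => Fin.addCases (motive := fun _ => Fin (m + k) ⊕ C₂)
      (fun i : Fin n => (f (Sum.inl i)).map (Fin.castAdd k) id)
      (fun j : Fin k => Sum.inl (Fin.natAdd m j)) v
  | .inr c => (f (Sum.inr c)).map (Fin.castAdd k) id

def relabel {C₁ C₂ : Type} :
    {n m : ℕ} → ((Fin n ⊕ C₁) → (Fin m ⊕ C₂)) → Fml R C₁ ar n → Fml R C₂ ar m
  | _, _, _, .tru => .tru
  | _, _, _, .fls => .fls
  | _, _, f, .atom r args => .atom r (f ∘ args)
  | _, _, f, .eq t₁ t₂ => .eq (f t₁) (f t₂)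
  | _, _, f, .not φ => .not (relabel f φ)
  | _, _, f, .and φ ψ => .and (relabel f φ) (relabel f ψ)
  | _, _, f, .or φ ψ => .or (relabel f φ) (relabel f ψ)
  | _, _, f, .ex k φ => .ex k (relabel (extendMap f k) φ)
  | _, _, f, .all k φ => .all k (relabel (extendMap f k) φ)

/-- The constant-free sentence `φ' = ∃c⃗ (P(c⃗) ∧ φ[R*(c⃗,x⃗)/R(x⃗)])`: the `c`
constants become the variables bound by the outer existential block, guarded
by the fresh predicate `P`. -/
def elimConsts {c : ℕ} (φ : Fml R (Fin c) ar 0) : Fml (Option R) Empty (starAr ar c) 0 :=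
  Fml.ex c
    ((Fml.atom (none : Option R)
        (fun j : Fin c => (Sum.inl (Fin.natAdd 0 j) : Fin (0 + c) ⊕ Empty))).and
      (relabel
        (fun t => match t with
          | Sum.inl v => v.elim0
          | Sum.inr j => Sum.inl (Fin.natAdd 0 j))
        (star φ)))

/-! Auxiliary lemmas -/

lemma fin_cases_add {n k : ℕ} (w : Fin (n + k)) :
    (∃ i, w = Fin.castAdd k i) ∨ ∃ j, w = Fin.natAdd n j :=
  Fin.addCases (fun i => Or.inl ⟨i, rfl⟩) (fun j => Or.inr ⟨j, rfl⟩) w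

lemma extendMap_castAdd {C₁ C₂ : Type} {n m : ℕ} (f : (Fin n ⊕ C₁) → (Fin m ⊕ C₂))
    (k : ℕ) (i : Fin n) :
    extendMap f k (Sum.inl (Fin.castAdd k i)) = (f (Sum.inl i)).map (Fin.castAdd k) id := by
  simp [extendMap]

lemma extendMap_natAdd {C₁ C₂ : Type} {n m : ℕ} (f : (Fin n ⊕ C₁) → (Fin m ⊕ C₂))
    (k : ℕ) (j : Fin k) :
    extendMap f k (Sum.inl (Fin.natAdd n j)) = Sum.inl (Fin.natAdd m j) := by
  simp [extendMap]

lemma extendMap_inr {C₁ C₂ : Type} {n m : ℕ} (f : (Fin n ⊕ C₁) → (Fin m ⊕ C₂))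
    (k : ℕ) (c : C₁) :
    extendMap f k (Sum.inr c) = (f (Sum.inr c)).map (Fin.castAdd k) id := rfl

lemma freeVars_star {c : ℕ} : ∀ {n : ℕ} (ψ : Fml R (Fin c) ar n) (v : Fin n),
    v ∈ (star ψ).freeVars → v ∈ ψ.freeVars := by
  intro n ψ
  induction ψ with
  | tru => intro v h; exact h
  | fls => intro v h; exact h
  | atom r args =>
      intro v h
      obtain ⟨i, hi⟩ := h
      rcases fin_cases_add i with ⟨i', rfl⟩ | ⟨i', rfl⟩
      · simp [Fin.addCases_left] at hi
      · simp only [Fin.addCases_right] at hi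
        exact ⟨i', hi⟩
  | eq t₁ t₂ => intro v h; exact h
  | not φ ih => exact ih
  | and φ ψ ih₁ ih₂ =>
      intro v h
      rcases h with h | h
      · exact Or.inl (ih₁ v h)
      · exact Or.inr (ih₂ v h)
  | or φ ψ ih₁ ih₂ =>
      intro v h
      rcases h with h | h
      · exact Or.inl (ih₁ v h)
      · exact Or.inr (ih₂ v h)
  | ex k φ ih => intro v h; exact ih _ h
  | all k φ ih => intro v h; exact ih _ h

lemma freeVars_relabel {C₁ C₂ : Type} :
    ∀ {n m : ℕ} (ψ : Fml R C₁ ar n) (g : (Fin n ⊕ C₁) → (Fin m ⊕ C₂)) (v : Fin m),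
    v ∈ (relabel g ψ).freeVars →
      (∃ w ∈ ψ.freeVars, g (Sum.inl w) = Sum.inl v) ∨ (∃ j : C₁, g (Sum.inr j) = Sum.inl v) := by
  intro n m ψ
  induction ψ generalizing m with
  | tru => intro g v h; exact h.elim
  | fls => intro g v h; exact h.elim
  | atom r args =>
      intro g v h
      obtain ⟨i, hi⟩ := h
      cases hargs : args i with
      | inl w =>
          refine Or.inl ⟨w, ⟨i, hargs⟩, ?_⟩
          simpa [Function.comp, hargs] using hi
      | inr j =>
          refine Or.inr ⟨j, ?_⟩
          simpa [Function.comp, hargs] using hi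
  | eq t₁ t₂ =>
      intro g v h
      rcases h with h | h
      · cases t₁ with
        | inl w => exact Or.inl ⟨w, Or.inl rfl, h⟩
        | inr j => exact Or.inr ⟨j, h⟩
      · cases t₂ with
        | inl w => exact Or.inl ⟨w, Or.inr rfl, h⟩
        | inr j => exact Or.inr ⟨j, h⟩
  | not φ ih => exact ih
  | and φ ψ ih₁ ih₂ =>
      intro g v h
      rcases h with h | h
      · rcases ih₁ g v h with ⟨w, hw, hgw⟩ | h' <;>
          [exact Or.inl ⟨w, Or.inl hw, hgw⟩; exact Or.inr h']
      · rcases ih₂ g v h with ⟨w, hw, hgw⟩ | h' <;>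
          [exact Or.inl ⟨w, Or.inr hw, hgw⟩; exact Or.inr h']
  | or φ ψ ih₁ ih₂ =>
      intro g v h
      rcases h with h | h
      · rcases ih₁ g v h with ⟨w, hw, hgw⟩ | h' <;>
          [exact Or.inl ⟨w, Or.inl hw, hgw⟩; exact Or.inr h']
      · rcases ih₂ g v h with ⟨w, hw, hgw⟩ | h' <;>
          [exact Or.inl ⟨w, Or.inr hw, hgw⟩; exact Or.inr h']
  | ex k φ ih =>
      intro g v h
      rcases ih (extendMap g k) (Fin.castAdd k v) h with ⟨w, hw, hgw⟩ | ⟨j, hj⟩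
      · rcases fin_cases_add w with ⟨i, rfl⟩ | ⟨j, rfl⟩
        · rw [extendMap_castAdd] at hgw
          cases hgi : g (Sum.inl i) with
          | inl v' =>
              rw [hgi] at hgw
              simp only [Sum.map_inl, Sum.inl.injEq] at hgw
              exact Or.inl ⟨i, hw, by rw [hgi, Fin.castAdd_injective _ _ hgw]⟩
          | inr c' => rw [hgi] at hgw; simp at hgw
        · rw [extendMap_natAdd] at hgw
          simp only [Sum.inl.injEq] at hgw
          have : m + (j : ℕ) = (v : ℕ) := congrArg Fin.val hgw
          omega
      · rw [extendMap_inr] at hj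
        cases hgj : g (Sum.inr j) with
        | inl v' =>
            rw [hgj] at hj
            simp only [Sum.map_inl, Sum.inl.injEq] at hj
            exact Or.inr ⟨j, by rw [hgj, Fin.castAdd_injective _ _ hj]⟩
        | inr c' => rw [hgj] at hj; simp at hj
  | all k φ ih =>
      intro g v h
      rcases ih (extendMap g k) (Fin.castAdd k v) h with ⟨w, hw, hgw⟩ | ⟨j, hj⟩
      · rcases fin_cases_add w with ⟨i, rfl⟩ | ⟨j, rfl⟩
        · rw [extendMap_castAdd] at hgw
          cases hgi : g (Sum.inl i) with
          | inl v' =>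
              rw [hgi] at hgw
              simp only [Sum.map_inl, Sum.inl.injEq] at hgw
              exact Or.inl ⟨i, hw, by rw [hgi, Fin.castAdd_injective _ _ hgw]⟩
          | inr c' => rw [hgi] at hgw; simp at hgw
        · rw [extendMap_natAdd] at hgw
          simp only [Sum.inl.injEq] at hgw
          have : m + (j : ℕ) = (v : ℕ) := congrArg Fin.val hgw
          omega
      · rw [extendMap_inr] at hj
        cases hgj : g (Sum.inr j) with
        | inl v' =>
            rw [hgj] at hj
            simp only [Sum.map_inl, Sum.inl.injEq] at hj
            exact Or.inr ⟨j, by rw [hgj, Fin.castAdd_injective _ _ hj]⟩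
        | inr c' => rw [hgj] at hj; simp at hj

lemma isGF_relabel_star {c : ℕ} :
    ∀ {n : ℕ} {ψ : Fml R (Fin c) ar n}, IsGF ψ →
    ∀ {m : ℕ} (g : (Fin n ⊕ Fin c) → (Fin m ⊕ Empty)),
      IsGF (relabel g (star ψ)) := by
  intro n ψ hψ
  induction hψ with
  | tru => intro m g; exact IsGF.tru
  | fls => intro m g; exact IsGF.fls
  | atom r args => intro m g; exact IsGF.atom _ _
  | eq t₁ t₂ => intro m g; exact IsGF.eq _ _
  | not h ih => intro m g; exact IsGF.not (ih g)
  | and h₁ h₂ ih₁ ih₂ => intro m g; exact IsGF.and (ih₁ g) (ih₂ g)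
  | or h₁ h₂ ih₁ ih₂ => intro m g; exact IsGF.or (ih₁ g) (ih₂ g)
  | @ex n' k r gargs φ hφ hg ih =>
      intro m g
      refine IsGF.ex (some r) _ (ih (extendMap g k)) ?_
      intro v hv
      rcases freeVars_relabel (star φ) (extendMap g k) v hv with ⟨w, hw, hgw⟩ | ⟨j, hj⟩
      · obtain ⟨i, hi⟩ := hg w (freeVars_star φ w hw)
        refine ⟨Fin.natAdd c i, ?_⟩
        show extendMap g k (Fin.addCases (motive := fun _ => _) (fun j : Fin c => Sum.inr j) gargs (Fin.natAdd c i)) = Sum.inl v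
        rw [Fin.addCases_right]
        rw [hi]
        exact hgw
      · refine ⟨Fin.castAdd (ar r) j, ?_⟩
        show extendMap g k (Fin.addCases (motive := fun _ => _) (fun j : Fin c => Sum.inr j) gargs (Fin.castAdd (ar r) j)) = Sum.inl v
        rw [Fin.addCases_left]
        exact hj
  | @all n' k r gargs φ hφ hg ih =>
      intro m g
      refine IsGF.all (some r) _ (ih (extendMap g k)) ?_
      intro v hv
      rcases freeVars_relabel (star φ) (extendMap g k) v hv with ⟨w, hw, hgw⟩ | ⟨j, hj⟩
      · obtain ⟨i, hi⟩ := hg w (freeVars_star φ w hw)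
        refine ⟨Fin.natAdd c i, ?_⟩
        show extendMap g k (Fin.addCases (motive := fun _ => _) (fun j : Fin c => Sum.inr j) gargs (Fin.natAdd c i)) = Sum.inl v
        rw [Fin.addCases_right]
        rw [hi]
        exact hgw
      · refine ⟨Fin.castAdd (ar r) j, ?_⟩
        show extendMap g k (Fin.addCases (motive := fun _ => _) (fun j : Fin c => Sum.inr j) gargs (Fin.castAdd (ar r) j)) = Sum.inl v
        rw [Fin.addCases_left]
        exact hj

lemma extend_compat {c : ℕ} {M : Type} {n m k : ℕ}
    (g : (Fin n ⊕ Fin c) → (Fin m ⊕ Empty)) (a : Fin n → M) (b : Fin m → M)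
    (cI : Fin c → M) (w : Fin k → M)
    (hc : ∀ t, (g t).elim b (fun e => e.elim) = t.elim a cI) :
    ∀ t, ((extendMap g k t).elim (Fin.append b w) (fun e => e.elim) : M) =
      t.elim (Fin.append a w) cI := by
  intro t
  cases t with
  | inl v =>
      rcases fin_cases_add v with ⟨i, rfl⟩ | ⟨j, rfl⟩
      · rw [extendMap_castAdd]
        cases hgi : g (Sum.inl i) with
        | inl v' =>
            simp only [Sum.map_inl, Sum.elim_inl, Fin.append_left]
            have := hc (Sum.inl i); rw [hgi] at this
            simpa using this
        | inr e => exact e.elim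
      · rw [extendMap_natAdd]
        simp [Fin.append_right]
  | inr j =>
      rw [extendMap_inr]
      cases hgj : g (Sum.inr j) with
      | inl v' =>
          simp only [Sum.map_inl, Sum.elim_inl, Fin.append_left]
          have := hc (Sum.inr j); rw [hgj] at this
          simpa using this
      | inr e => exact e.elim

lemma realize_relabel_star {c : ℕ} {M : Type}
    (interp : ∀ r : R, (Fin (ar r) → M) → Prop)
    (interp' : ∀ r : Option R, (Fin (starAr ar c r) → M) → Prop)
    (cI : Fin c → M)
    (hI : ∀ (r : R) (v : Fin (c + ar r) → M),
      (∀ j, v (Fin.castAdd (ar r) j) = cI j) →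
      (interp' (some r) v ↔ interp r (fun i => v (Fin.natAdd c i)))) :
    ∀ {n m : ℕ} (ψ : Fml R (Fin c) ar n) (g : (Fin n ⊕ Fin c) → (Fin m ⊕ Empty))
      (a : Fin n → M) (b : Fin m → M),
      (∀ t, (g t).elim b (fun e => e.elim) = t.elim a cI) →
      (Fml.Realize interp' (fun e : Empty => e.elim) (relabel g (star ψ)) b ↔
        Fml.Realize interp cI ψ a) := by
  intro n m ψ
  induction ψ generalizing m with
  | tru => intro g a b hc; exact Iff.rfl
  | fls => intro g a b hc; exact Iff.rfl
  | atom r args =>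
      intro g a b hc
      simp only [star, relabel, Fml.Realize]
      refine Iff.trans (hI r _ ?_) (iff_of_eq (congrArg (interp r) ?_))
      · intro j
        show (g (Fin.addCases (motive := fun _ => _) (fun j : Fin c => Sum.inr j) args (Fin.castAdd (ar r) j))).elim b (fun e => e.elim) = cI j
        rw [Fin.addCases_left]
        exact hc (Sum.inr j)
      · funext i
        show (g (Fin.addCases (motive := fun _ => _) (fun j : Fin c => Sum.inr j) args (Fin.natAdd c i))).elim b (fun e => e.elim) = (args i).elim a cI
        rw [Fin.addCases_right]
        exact hc (args i)
  | eq t₁ t₂ =>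
      intro g a b hc
      simp only [star, relabel, Fml.Realize]
      rw [hc t₁, hc t₂]
  | not φ ih =>
      intro g a b hc
      simp only [star, relabel, Fml.Realize]
      rw [ih g a b hc]
  | and φ ψ ih₁ ih₂ =>
      intro g a b hc
      simp only [star, relabel, Fml.Realize]
      rw [ih₁ g a b hc, ih₂ g a b hc]
  | or φ ψ ih₁ ih₂ =>
      intro g a b hc
      simp only [star, relabel, Fml.Realize]
      rw [ih₁ g a b hc, ih₂ g a b hc]
  | ex k φ ih =>
      intro g a b hc
      simp only [star, relabel, Fml.Realize]
      constructor
      · rintro ⟨w, hw⟩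
        exact ⟨w, (ih (extendMap g k) (Fin.append a w) (Fin.append b w)
          (extend_compat g a b cI w hc)).mp hw⟩
      · rintro ⟨w, hw⟩
        exact ⟨w, (ih (extendMap g k) (Fin.append a w) (Fin.append b w)
          (extend_compat g a b cI w hc)).mpr hw⟩
  | all k φ ih =>
      intro g a b hc
      simp only [star, relabel, Fml.Realize]
      constructor
      · intro h w
        exact (ih (extendMap g k) (Fin.append a w) (Fin.append b w)
          (extend_compat g a b cI w hc)).mp (h w)
      · intro h w
        exact (ih (extendMap g k) (Fin.append a w) (Fin.append b w)
          (extend_compat g a b cI w hc)).mpr (h w)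

/-- For every GF sentence `φ` with constants `c₁,…,c_k`, the sentence `φ'`
(constant-free, over the extended schema) is in the guarded fragment and is
satisfiable if and only if `φ` is satisfiable. -/
theorem gf_constant_elimination (c : ℕ) (φ : Fml R (Fin c) ar 0) (hφ : IsGF φ) :
    IsGF (elimConsts φ) ∧
    ((∃ (M : Type) (_ : Nonempty M) (interp : ∀ r : R, (Fin (ar r) → M) → Prop)
        (cI : Fin c → M), Fml.Realize interp cI φ (fun i => i.elim0)) ↔
      (∃ (M : Type) (_ : Nonempty M)
          (interp : ∀ r : Option R, (Fin (starAr ar c r) → M) → Prop),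
        Fml.Realize interp (fun e : Empty => e.elim) (elimConsts φ)
          (fun i => i.elim0))) := by
  constructor
  · -- GF-ness of `elimConsts φ`
    refine IsGF.ex none _ (isGF_relabel_star hφ _) ?_
    intro v _
    refine ⟨⟨v.val, by simpa [starAr] using v.isLt⟩, ?_⟩
    congr 1
    ext
    simp [Fin.natAdd]
  · constructor
    · rintro ⟨M, hM, interp, cI, hreal⟩
      refine ⟨M, hM, fun r => match r with
        | none => fun _ => True
        | some r => fun v => interp r (fun i => v (Fin.natAdd c i)), ?_⟩
      simp only [elimConsts, Fml.Realize]
      refine ⟨cI, trivial, ?_⟩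
      refine (realize_relabel_star interp _ cI (fun r v _ => Iff.rfl) φ _
        (fun i => i.elim0) (Fin.append (fun i => i.elim0) cI) ?_).mpr hreal
      intro t
      cases t with
      | inl v => exact v.elim0
      | inr j => simp [Fin.append_right]
    · rintro ⟨M, hM, interp', hreal⟩
      simp only [elimConsts, Fml.Realize] at hreal
      obtain ⟨w, _, hψ⟩ := hreal
      refine ⟨M, hM, fun r f => interp' (some r) (Fin.append w f), w, ?_⟩
      refine (realize_relabel_star _ interp' w ?_ φ _
        (fun i => i.elim0) (Fin.append (fun i => i.elim0) w) ?_).mp hψ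
      · intro r v hv
        have : Fin.append w (fun i => v (Fin.natAdd c i)) = v := by
          funext i
          rcases fin_cases_add i with ⟨j, rfl⟩ | ⟨j, rfl⟩
          · rw [Fin.append_left]; exact (hv j).symm
          · rw [Fin.append_right]
        rw [this]
      · intro t
        cases t with
        | inl v => exact v.elim0
        | inr j => simp [Fin.append_right]

end Stmt9
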